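/- arXiv:1903.08014 — 2 statements merged into one kernel-verified Lean document; each statement's English description precedes it below -/
import Mathlib

section
/- Let n ≥ 2 and c ≥ 2 be integers, and let S ⊆ {1, …, n} be a nonempty set with maximum element i. Assign to each j ∈ S the weight n^(c·j). Then n^(c·i) / (∑_{j ∈ S} n^(c·j)) ≥ 1 − n^(1−c); in particular, an element of S sampled with probability proportional to its weight equals the maximum element of S with probability at least 1 − 1/n. -/
/-- the quantitative core of the reduction from range maximum to
weighted range sampling.  If element `j` gets weight `n^(c*j)`, the maximum
element of a nonempty query range `S ⊆ {1,…,n}` carries at least a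
`1 - n^(1-c) ≥ 1 - 1/n` fraction of the total weight. -/
theorem stmt_0 (n c : ℕ) (hn : 2 ≤ n) (hc : 2 ≤ c)
    (S : Finset ℕ) (hS : S ⊆ Finset.Icc 1 n) (hne : S.Nonempty) :
    (1 : ℝ) - (n : ℝ) ^ ((1 : ℤ) - (c : ℤ)) ≤
      (n : ℝ) ^ (c * S.max' hne) / ∑ j ∈ S, (n : ℝ) ^ (c * j) ∧
    (1 : ℝ) - 1 / (n : ℝ) ≤
      (n : ℝ) ^ (c * S.max' hne) / ∑ j ∈ S, (n : ℝ) ^ (c * j) := by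
  set i := S.max' hne with hidef
  have hiS : i ∈ S := S.max'_mem hne
  have hiIcc := Finset.mem_Icc.mp (hS hiS)
  obtain ⟨hi1, hin⟩ := hiIcc
  have hn0 : (0:ℝ) < n := by positivity
  have hn1 : (1:ℝ) < n := by exact_mod_cast hn
  set t : ℝ := (n : ℝ) ^ ((1 : ℤ) - (c : ℤ)) with htdef
  have ht0 : 0 < t := zpow_pos hn0 _
  have htle : t ≤ 1 / (n:ℝ) := by
    rw [htdef]
    have h1 : ((1:ℤ) - c) ≤ -1 := by omega
    calc (n:ℝ) ^ ((1:ℤ) - c) ≤ (n:ℝ) ^ (-1:ℤ) :=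
          zpow_le_zpow_right₀ hn1.le h1
      _ = 1 / (n:ℝ) := by rw [zpow_neg_one, one_div]
  have ht1 : t < 1 := lt_of_le_of_lt htle (by
    rw [div_lt_one hn0]; linarith)
  -- key: t * n^(c*i) = n^(c*(i-1)+1)
  have hkey : ((n:ℝ)) ^ (c*(i-1)+1) = t * (n:ℝ) ^ (c*i) := by
    rw [htdef, ← zpow_natCast (n:ℝ) (c*i), ← zpow_natCast (n:ℝ) (c*(i-1)+1),
      ← zpow_add₀ (ne_of_gt hn0)]
    congr 1
    have : (1:ℕ) ≤ i := hi1
    push_cast [Nat.cast_sub this]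
    ring
  -- bound on the rest of the sum
  have hrest : ∑ j ∈ S.erase i, (n:ℝ) ^ (c*j) ≤ t * (n:ℝ) ^ (c*i) := by
    rw [← hkey]
    have hcard : (S.erase i).card ≤ n - 1 := by
      have h1 : (S.erase i).card ≤ S.card - 1 := by
        rw [Finset.card_erase_of_mem hiS]
      have h2 : S.card ≤ n := by
        calc S.card ≤ (Finset.Icc 1 n).card := Finset.card_le_card hS
          _ = n := by rw [Nat.card_Icc]; omega
      omega
    have hterm : ∀ j ∈ S.erase i, (n:ℝ) ^ (c*j) ≤ (n:ℝ) ^ (c*(i-1)) := by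
      intro j hj
      have hjS := Finset.mem_of_mem_erase hj
      have hjne := Finset.ne_of_mem_erase hj
      have hji : j ≤ i := S.le_max' j hjS
      have : j ≤ i - 1 := by omega
      exact pow_le_pow_right₀ hn1.le (Nat.mul_le_mul_left c this)
    calc ∑ j ∈ S.erase i, (n:ℝ) ^ (c*j)
        ≤ (S.erase i).card • (n:ℝ) ^ (c*(i-1)) :=
          Finset.sum_le_card_nsmul _ _ _ hterm
      _ = ((S.erase i).card : ℝ) * (n:ℝ) ^ (c*(i-1)) := by
          rw [nsmul_eq_mul]
      _ ≤ (n:ℝ) * (n:ℝ) ^ (c*(i-1)) := by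
          have : ((S.erase i).card : ℝ) ≤ (n:ℝ) := by
            exact_mod_cast le_trans hcard (Nat.sub_le n 1)
          exact mul_le_mul_of_nonneg_right this (by positivity)
      _ = (n:ℝ) ^ (c*(i-1)+1) := by ring
  have hsum : ∑ j ∈ S, (n:ℝ) ^ (c*j) ≤ (n:ℝ) ^ (c*i) * (1 + t) := by
    have := Finset.sum_erase_add S (fun j => (n:ℝ) ^ (c*j)) hiS
    nlinarith [pow_pos hn0 (c*i)]
  have hsumpos : 0 < ∑ j ∈ S, (n:ℝ) ^ (c*j) :=
    Finset.sum_pos (fun j _ => pow_pos hn0 _) hne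
  have hmain : (1:ℝ) - t ≤ (n:ℝ) ^ (c*i) / ∑ j ∈ S, (n:ℝ) ^ (c*j) := by
    rw [le_div_iff₀ hsumpos]
    nlinarith [mul_le_mul_of_nonneg_left hsum (by linarith : (0:ℝ) ≤ 1 - t),
      mul_nonneg (pow_pos hn0 (c*i)).le (mul_self_nonneg t)]
  refine ⟨hmain, le_trans (by linarith) hmain⟩
end

section
/- Let π ∈ (0, 1], u ∈ [0, 1], q ≥ 0, and ε ∈ (0, 1/2] with 1 − π ≤ ε. Define ρ = q·π/(1 − (1−π)(1−u)) and ρ′ = q·(π + (1−π)(1−u)). Then ρ ≤ ρ′ ≤ q ≤ (1+2ε)·ρ. -/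
/-- the inside-point case of the one-shot deterministic sampling
lemma.  With coin probability `pi ≥ 1 - ε` of visiting the inside structure,
conditional draw probability `q`, and per-round failure probability
`(1 - pi)·(1 - u)`, the rejection-sampling probability
`ρ = q·pi/(1-(1-pi)(1-u))` and the one-shot probability
`ρ' = q·(pi + (1-pi)(1-u))` satisfy `ρ ≤ ρ' ≤ q ≤ (1+2ε)·ρ`. -/
theorem stmt_6 (pi u q ε : ℝ) (hpi0 : 0 < pi) (hpi1 : pi ≤ 1)
    (hu0 : 0 ≤ u) (hu1 : u ≤ 1) (hq : 0 ≤ q)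
    (hε0 : 0 < ε) (hε1 : ε ≤ 1 / 2) (hπε : 1 - pi ≤ ε)
    (ρ ρ' : ℝ)
    (hρ : ρ = q * pi / (1 - (1 - pi) * (1 - u)))
    (hρ' : ρ' = q * (pi + (1 - pi) * (1 - u))) :
    ρ ≤ ρ' ∧ ρ' ≤ q ∧ q ≤ (1 + 2 * ε) * ρ := by
  set f := (1 - pi) * (1 - u) with hf
  have hf0 : 0 ≤ f := mul_nonneg (by linarith) (by linarith)
  have hf1 : f ≤ 1 - pi := by
    nlinarith
  have hD : 0 < 1 - f := by linarith
  subst hρ hρ'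
  refine ⟨?_, ?_, ?_⟩
  · rw [div_le_iff₀ hD]
    nlinarith [mul_nonneg (mul_nonneg hq hf0) (show (0:ℝ) ≤ 1 - pi - f by linarith)]
  · nlinarith
  · rw [mul_div_assoc', le_div_iff₀ hD]
    nlinarith [mul_nonneg hq hf0, mul_nonneg hq (show (0:ℝ) ≤ ε - (1 - pi) by linarith),
      mul_nonneg hq (mul_nonneg hε0.le (show (0:ℝ) ≤ 1 - 2*ε + 2*pi*2 by nlinarith))]
end
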